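/- If T is a well-founded tree (no infinite paths) whose root has rank β, then the grounding ordinal of the AF F_T is exactly β + 1. -/

import Mathlib

def defenseFn {A : Type*} (att : A → A → Prop) (S : Set A) : Set A :=
  {x | ∀ y, att y x → ∃ z ∈ S, att z y}

/-- `G` is the transfinite iteration of the defense function from `∅`. -/
def IsIter {A : Type*} (att : A → A → Prop) (G : Ordinal → Set A) : Prop :=
  G 0 = ∅ ∧ (∀ β : Ordinal, G (β + 1) = defenseFn att (G β)) ∧
    ∀ l : Ordinal, Order.IsSuccLimit l → G l = ⋃ β ∈ Set.Iio l, G β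

/-- `Gr` is the grounded extension: the least fixed point of the defense function. -/
def IsGrounded {A : Type*} (att : A → A → Prop) (Gr : Set A) : Prop :=
  defenseFn att Gr = Gr ∧ ∀ S, defenseFn att S = S → Gr ⊆ S

/-- A tree: a prefix-closed set of finite sequences of naturals. -/
def IsTree (T : Set (List ℕ)) : Prop := ∀ σ ∈ T, ∀ τ : List ℕ, τ <+: σ → τ ∈ T

/-- `RankLE T σ β` : `σ` is ranked in `T` with rank at most `β`
(every child of `σ` in `T` has rank strictly less than `β`). -/
inductive RankLE (T : Set (List ℕ)) : List ℕ → Ordinal → Prop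
  | intro (σ : List ℕ) (β : Ordinal) (g : ℕ → Ordinal)
      (hlt : ∀ n : ℕ, σ ++ [n] ∈ T → g n < β)
      (h : ∀ n : ℕ, σ ++ [n] ∈ T → RankLE T (σ ++ [n]) (g n)) : RankLE T σ β

/-- The AF `F_T` built from a tree `T`: arguments are `(false, σ)` (the `a_σ`'s)
and `(true, σ)` (the `b_σ`'s) for `σ ∈ T`; `b_σ` attacks `a_{σ⁻}` and `a_σ` attacks `b_σ`. -/
def ftAtt (T : Set (List ℕ)) : Bool × List ℕ → Bool × List ℕ → Prop := fun x y =>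
  (x.2 ∈ T ∧ x.1 = true ∧ y.1 = false ∧ x.2 ≠ [] ∧ y.2 = x.2.dropLast) ∨
  (x.2 ∈ T ∧ x.1 = false ∧ y.1 = true ∧ y.2 = x.2)

section Aux

open Ordinal

variable {T : Set (List ℕ)} {G : Ordinal → Set (Bool × List ℕ)}

lemma rankLE_mono {σ : List ℕ} {γ γ' : Ordinal} (h : RankLE T σ γ) (hle : γ ≤ γ') :
    RankLE T σ γ' := by
  cases h with
  | intro σ β g hlt h =>
    exact RankLE.intro σ γ' g (fun n hn => lt_of_lt_of_le (hlt n hn) hle) h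

lemma defenseFn_mono {A : Type*} (att : A → A → Prop) {S S' : Set A} (h : S ⊆ S') :
    defenseFn att S ⊆ defenseFn att S' := by
  intro x hx y hy
  obtain ⟨z, hz, hzy⟩ := hx y hy
  exact ⟨z, h hz, hzy⟩

lemma iter_mono {A : Type*} {att : A → A → Prop} {G : Ordinal → Set A}
    (hG : IsIter att G) : ∀ δ γ, γ ≤ δ → G γ ⊆ G δ := by
  obtain ⟨h0, hs, hl⟩ := hG
  intro δ
  induction δ using Ordinal.induction with
  | h δ IH =>
    intro γ hγ
    rcases eq_or_lt_of_le hγ with rfl | hγ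
    · exact subset_rfl
    rcases Ordinal.zero_or_succ_or_isSuccLimit δ with rfl | ⟨ε, rfl⟩ | hlim
    · exact absurd hγ (not_lt_zero (a := γ))
    · rw [← Ordinal.add_one_eq_succ] at *
      have h1 : G γ ⊆ G ε := IH ε (lt_of_le_of_lt le_rfl (by rw [Ordinal.add_one_eq_succ]; exact Order.lt_succ ε)) γ
        (by rw [Ordinal.add_one_eq_succ, Order.lt_succ_iff] at hγ; exact hγ)
      have h2 : G ε ⊆ G (ε + 1) := by
        rcases Ordinal.zero_or_succ_or_isSuccLimit ε with rfl | ⟨ι, rfl⟩ | hlim'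
        · rw [h0]; exact Set.empty_subset _
        · rw [← Ordinal.add_one_eq_succ]
          rw [hs ι, hs (ι + 1)]
          refine defenseFn_mono _ (IH (ι + 1) ?_ ι (le_of_lt ?_))
          · rw [Ordinal.add_one_eq_succ, Ordinal.add_one_eq_succ]
            exact Order.lt_succ _
          · rw [Ordinal.add_one_eq_succ]; exact Order.lt_succ _
        · rw [hs ε]
          intro x hx
          rw [hl ε hlim'] at hx
          obtain ⟨ι, hι, hx⟩ := Set.mem_iUnion₂.mp hx
          have hι1 : ι + 1 < ε := hlim'.succ_lt hι
          have hx1 : x ∈ G (ι + 1) :=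
            IH (ι + 1) (lt_trans hι1 (by rw [Ordinal.add_one_eq_succ]; exact Order.lt_succ ε))
              ι (le_of_lt (by rw [Ordinal.add_one_eq_succ]; exact Order.lt_succ _)) hx
          rw [hs ι] at hx1
          refine defenseFn_mono _ ?_ hx1
          exact IH ε (by rw [Ordinal.add_one_eq_succ]; exact Order.lt_succ ε) ι (le_of_lt hι)
      exact fun x hx => h2 (h1 hx)
    · rw [hl δ hlim]
      exact fun x hx => Set.mem_iUnion₂.mpr ⟨γ, hγ, hx⟩

lemma iter_subset_grounded {A : Type*} {att : A → A → Prop} {G : Ordinal → Set A}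
    {Gr : Set A} (hG : IsIter att G) (hGr : IsGrounded att Gr) : ∀ α, G α ⊆ Gr := by
  intro α
  induction α using Ordinal.induction with
  | h α IH =>
    rcases Ordinal.zero_or_succ_or_isSuccLimit α with rfl | ⟨ε, rfl⟩ | hlim
    · rw [hG.1]; exact Set.empty_subset _
    · rw [← Ordinal.add_one_eq_succ, hG.2.1 ε]
      have := defenseFn_mono att (IH ε (Order.lt_succ ε))
      rw [hGr.1] at this
      exact this
    · rw [hG.2.2 α hlim]
      exact Set.iUnion₂_subset fun ι hι => IH ι hι

lemma no_b (hG : IsIter (ftAtt T) G) :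
    ∀ α, ∀ σ ∈ T, (true, σ) ∉ G α := by
  intro α
  induction α using Ordinal.induction with
  | h α IH =>
    intro σ hσ hmem
    rcases Ordinal.zero_or_succ_or_isSuccLimit α with rfl | ⟨ε, rfl⟩ | hlim
    · rw [hG.1] at hmem; exact hmem
    · rw [← Ordinal.add_one_eq_succ, hG.2.1 ε] at hmem
      obtain ⟨z, hz, hzatt⟩ := hmem (false, σ) (Or.inr ⟨hσ, rfl, rfl, rfl⟩)
      rcases hzatt with ⟨hzT, hz1, -, -, -⟩ | ⟨-, -, habs, -⟩
      · have hzeq : z = (true, z.2) := Prod.ext hz1 rfl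
        rw [hzeq] at hz
        exact IH ε (Order.lt_succ ε) z.2 hzT hz
      · exact Bool.false_ne_true habs
    · rw [hG.2.2 α hlim] at hmem
      obtain ⟨ι, hι, h⟩ := Set.mem_iUnion₂.mp hmem
      exact IH ι hι σ hσ h

lemma a_mem_of_rank (hG : IsIter (ftAtt T) G) {σ : List ℕ} {γ : Ordinal}
    (h : RankLE T σ γ) : (false, σ) ∈ G (γ + 1) := by
  induction h with
  | intro σ γ g hlt h IH =>
    rw [hG.2.1 γ]
    intro y hy
    rcases hy with ⟨hyT, hy1, -, hyne, hydl⟩ | ⟨-, -, habs, -⟩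
    · -- y.2 = σ ++ [n] with n its last entry
      set n := y.2.getLast hyne with hn
      have hy2 : y.2 = σ ++ [n] := by
        conv_lhs => rw [← List.dropLast_append_getLast hyne]
        rw [← hydl]
      rw [hy2] at hyT
      have hmem : (false, σ ++ [n]) ∈ G (g n + 1) := IH n hyT
      have hle : g n + 1 ≤ γ := by
        rw [Ordinal.add_one_eq_succ, Order.succ_le_iff]
        exact hlt n hyT
      refine ⟨(false, σ ++ [n]), iter_mono hG γ (g n + 1) hle hmem, ?_⟩
      exact Or.inr ⟨hyT, rfl, hy1, hy2⟩
    · exact absurd habs (by simp)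

lemma rank_of_a_mem (hG : IsIter (ftAtt T) G) :
    ∀ α σ, (false, σ) ∈ G α → ∃ γ < α, RankLE T σ γ := by
  intro α
  induction α using Ordinal.induction with
  | h α IH =>
    intro σ hmem
    rcases Ordinal.zero_or_succ_or_isSuccLimit α with rfl | ⟨ε, rfl⟩ | hlim
    · rw [hG.1] at hmem; exact absurd hmem (Set.notMem_empty _)
    · rw [← Ordinal.add_one_eq_succ] at *
      rw [hG.2.1 ε] at hmem
      refine ⟨ε, by rw [Ordinal.add_one_eq_succ]; exact Order.lt_succ ε, ?_⟩
      have H : ∀ n : ℕ, σ ++ [n] ∈ T → ∃ γ, γ < ε ∧ RankLE T (σ ++ [n]) γ := by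
        intro n hn
        obtain ⟨z, hz, hzatt⟩ := hmem (true, σ ++ [n])
          (Or.inl ⟨hn, rfl, rfl, by simp, (List.dropLast_concat).symm⟩)
        rcases hzatt with ⟨-, -, habs, -, -⟩ | ⟨-, hz1, -, hz2⟩
        · exact absurd habs (by simp)
        · have hzeq : z = (false, σ ++ [n]) := Prod.ext hz1 hz2.symm
          rw [hzeq] at hz
          obtain ⟨γ, hγ, hr⟩ := IH ε (by rw [Ordinal.add_one_eq_succ]; exact Order.lt_succ ε) _ hz
          exact ⟨γ, hγ, hr⟩
      choose! g hg1 hg2 using H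
      exact RankLE.intro σ ε g hg1 hg2
    · rw [hG.2.2 α hlim] at hmem
      obtain ⟨ι, hι, h⟩ := Set.mem_iUnion₂.mp hmem
      obtain ⟨γ, hγ, hr⟩ := IH ι hι σ h
      exact ⟨γ, lt_trans hγ hι, hr⟩

lemma notin_mem_one (hT : IsTree T) (hG : IsIter (ftAtt T) G) {τ : List ℕ}
    (hτ : τ ∉ T) (b : Bool) : (b, τ) ∈ G 1 := by
  have h1 : (1 : Ordinal) = 0 + 1 := (zero_add 1).symm
  rw [h1, hG.2.1 0, hG.1]
  intro y hy
  exfalso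
  rcases hy with ⟨hyT, -, -, -, hydl⟩ | ⟨hyT, -, -, hye⟩
  · exact hτ (by rw [show τ = y.2.dropLast from hydl]; exact hT y.2 hyT _ y.2.dropLast_prefix)
  · exact hτ (by rw [show τ = y.2 from hye]; exact hyT)

lemma rank_all (hT : IsTree T) {β : Ordinal} (hβ : RankLE T [] β) :
    ∀ σ ∈ T, RankLE T σ β := by
  intro σ
  induction σ using List.reverseRecOn with
  | nil => exact fun _ => hβ
  | append_singleton l n IH =>
    intro h
    have hl : l ∈ T := hT _ h l ⟨[n], rfl⟩
    cases IH hl with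
    | intro _ _ g hlt hr =>
      exact rankLE_mono (hr n h) (le_of_lt (hlt n h))

end Aux
/-- If `T` is a well-founded tree whose root has rank exactly `β`, then the
grounding ordinal of `F_T` is exactly `β + 1`. -/
theorem ft_grounding_ordinal (T : Set (List ℕ)) (hT : IsTree T) (hroot : [] ∈ T)
    (hwf : ∀ σ ∈ T, ∃ γ : Ordinal, RankLE T σ γ)
    (β : Ordinal) (hβ : RankLE T [] β) (hβmin : ∀ γ < β, ¬ RankLE T [] γ)
    (G : Ordinal → Set (Bool × List ℕ)) (hG : IsIter (ftAtt T) G)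
    (Gr : Set (Bool × List ℕ)) (hGr : IsGrounded (ftAtt T) Gr) :
    G (β + 1) = Gr ∧ ∀ α : Ordinal, G α = Gr → β + 1 ≤ α := by
  have hmono := iter_mono hG
  have key : G (β + 1 + 1) ⊆ G (β + 1) := by
    intro x hx
    by_cases hxT : x.2 ∈ T
    · cases hb : x.1 with
      | true =>
        exfalso
        have hxeq : x = (true, x.2) := Prod.ext hb rfl
        rw [hxeq] at hx
        exact no_b hG (β + 1 + 1) x.2 hxT hx
      | false =>
        have hxeq : x = (false, x.2) := Prod.ext hb rfl
        rw [hxeq]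
        exact a_mem_of_rank hG (rank_all hT hβ x.2 hxT)
    · have h1 : (x.1, x.2) ∈ G 1 := notin_mem_one hT hG hxT x.1
      have hle : (1 : Ordinal) ≤ β + 1 := by
        calc (1 : Ordinal) = 0 + 1 := (zero_add 1).symm
        _ ≤ β + 1 := add_le_add_left (zero_le (a := β)) 1
      exact hmono (β + 1) 1 hle h1
  have hfix : defenseFn (ftAtt T) (G (β + 1)) = G (β + 1) := by
    apply Set.Subset.antisymm
    · rw [← hG.2.1 (β + 1)]; exact key
    · rw [← hG.2.1 (β + 1)]
      refine hmono (β + 1 + 1) (β + 1) (le_of_lt ?_)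
      rw [Ordinal.add_one_eq_succ (β + 1)]; exact Order.lt_succ _
  have hsub1 : Gr ⊆ G (β + 1) := hGr.2 _ hfix
  have hsub2 : G (β + 1) ⊆ Gr := iter_subset_grounded hG hGr (β + 1)
  refine ⟨Set.Subset.antisymm hsub2 hsub1, ?_⟩
  intro α hα
  by_contra hlt
  push_neg at hlt
  have hαβ : α ≤ β := by
    rw [Ordinal.add_one_eq_succ β, Order.lt_succ_iff] at hlt
    exact hlt
  have hroot_mem : (false, ([] : List ℕ)) ∈ G α := by
    rw [hα]
    exact hsub2 (a_mem_of_rank hG hβ)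
  obtain ⟨γ, hγ, hr⟩ := rank_of_a_mem hG α [] hroot_mem
  exact hβmin γ (lt_of_lt_of_le hγ hαβ) hr
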